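/- Let n ≥ 3. Suppose two regular n-gons, with centers c₁, c₂, circumradii R₁, R₂ > 0 and arbitrary orientations, have equal multisets of distances from a point M; write L₁ = |M − c₁| and L₂ = |M − c₂|. Then {R₁², L₁²} = {R₂², L₂²} as unordered pairs; in particular, if R₁ ≠ R₂ then R₂ = L₁ and L₂ = R₁, so the sizes of both regular n-gons are uniquely determined by the distances. -/

import Mathlib

open Complex Real Finset


lemma sum_exp_pow (n : ℕ) (hn : 0 < n) (α : ℝ) (m : ℕ) (hm : 0 < m) (hmn : m < n) :
    ∑ k ∈ Finset.range n, (Complex.exp (Complex.I * ((2*π*k/n + α : ℝ):ℂ)))^m = 0 := by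
  have hprim := Complex.isPrimitiveRoot_exp n hn.ne'
  set ζ : ℂ := Complex.exp (2*π*I/n) with hζ
  have hζn : ζ^n = 1 := hprim.pow_eq_one
  have hω : ζ^m ≠ 1 := hprim.pow_ne_one_of_pos_of_lt hm.ne' hmn
  have hn' : (n:ℂ) ≠ 0 := Nat.cast_ne_zero.mpr hn.ne'
  have key : ∀ k ∈ Finset.range n,
      (Complex.exp (Complex.I * ((2*π*k/n + α :ℝ):ℂ)))^m
        = Complex.exp (I*α*m) * (ζ^m)^k := by
    intro k _
    rw [hζ, ← pow_mul, ← Complex.exp_nat_mul, ← Complex.exp_nat_mul, ← Complex.exp_add]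
    congr 1
    push_cast
    field_simp
    ring
  rw [Finset.sum_congr rfl key, ← Finset.mul_sum, geom_sum_eq hω, ← pow_mul, mul_comm m n,
    pow_mul, hζn, one_pow, sub_self, zero_div, mul_zero]

lemma polygon_sums (n : ℕ) (hn : 3 ≤ n) (c M : ℂ) (R α : ℝ) :
    (∑ k ∈ Finset.range n, Complex.normSq (M - (c + R * Complex.exp (Complex.I * ((2*π*k/n + α :ℝ):ℂ))))
       = n * ((‖M-c‖)^2 + R^2)) ∧
    (∑ k ∈ Finset.range n, (Complex.normSq (M - (c + R * Complex.exp (Complex.I * ((2*π*k/n + α :ℝ):ℂ)))))^2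
       = n * (((‖M-c‖)^2 + R^2)^2 + 2*R^2*(‖M-c‖)^2)) := by
  have hn0 : 0 < n := by omega
  set d : ℂ := M - c with hd
  set e : ℕ → ℂ := fun k => Complex.exp (Complex.I * ((2*π*k/n + α :ℝ):ℂ)) with he
  have habs : ∀ k, Complex.normSq (e k) = 1 := by
    intro k
    rw [← Complex.sq_norm, he]
    simp only [mul_comm Complex.I]
    rw [Complex.norm_exp_ofReal_mul_I]; norm_num
  have hsum1 : ∑ k ∈ Finset.range n, e k = 0 := by
    have := sum_exp_pow n hn0 α 1 one_pos (by omega)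
    simpa [he] using this
  have hsum2 : ∑ k ∈ Finset.range n, (e k)^2 = 0 := by
    have := sum_exp_pow n hn0 α 2 two_pos (by omega)
    simpa [he] using this
  set x : ℕ → ℝ := fun k => (d * (starRingEnd ℂ) (e k)).re with hxdef
  have h1 : ∀ k, Complex.normSq (M - (c + R * e k))
      = (Complex.normSq d + R^2) - (2*R) * x k := by
    intro k
    have : M - (c + R * e k) = d - (R:ℂ) * e k := by rw [hd]; ring
    rw [this, Complex.normSq_sub, Complex.normSq_mul, Complex.normSq_ofReal, habs, hxdef]
    have : (d * (starRingEnd ℂ) ((R:ℂ) * e k)).re = ((d * (starRingEnd ℂ) (e k)).re) * R := by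
      rw [map_mul, Complex.conj_ofReal]
      have : d * ((R:ℂ) * (starRingEnd ℂ) (e k)) = (d * (starRingEnd ℂ) (e k)) * (R:ℂ) := by ring
      rw [this]; simp [Complex.mul_re]
    rw [this]; ring
  have hx : ∑ k ∈ Finset.range n, x k = 0 := by
    rw [hxdef]
    have : ∑ k ∈ Finset.range n, (d * (starRingEnd ℂ) (e k)).re
        = (d * (starRingEnd ℂ) (∑ k ∈ Finset.range n, e k)).re := by
      rw [map_sum, Finset.mul_sum, Complex.re_sum]
    rw [this, hsum1]; simp
  have hre : ∀ z : ℂ, z.re^2 = ((z^2).re + Complex.normSq z)/2 := by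
    intro z
    simp only [Complex.normSq_apply, pow_two, Complex.mul_re]
    ring
  have hx2 : ∑ k ∈ Finset.range n, (x k)^2 = n * Complex.normSq d / 2 := by
    have hxk : ∀ k, (x k)^2 = ((d^2 * (starRingEnd ℂ) ((e k)^2)).re + Complex.normSq d)/2 := by
      intro k
      rw [hxdef, hre]
      congr 2
      · congr 1; rw [map_pow]; ring
      · rw [Complex.normSq_mul, Complex.normSq_conj, habs, mul_one]
    have hz : ∑ k ∈ Finset.range n, (d^2 * (starRingEnd ℂ) ((e k)^2)).re = 0 := by
      have : ∑ k ∈ Finset.range n, (d^2 * (starRingEnd ℂ) ((e k)^2)).re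
          = (d^2 * (starRingEnd ℂ) (∑ k ∈ Finset.range n, (e k)^2)).re := by
        rw [map_sum, Finset.mul_sum, Complex.re_sum]
      rw [this, hsum2]; simp
    calc ∑ k ∈ Finset.range n, (x k)^2
        = ∑ k ∈ Finset.range n, ((d^2 * (starRingEnd ℂ) ((e k)^2)).re + Complex.normSq d)/2 := by
          exact Finset.sum_congr rfl fun k _ => hxk k
      _ = ((∑ k ∈ Finset.range n, (d^2 * (starRingEnd ℂ) ((e k)^2)).re)
            + n * Complex.normSq d)/2 := by
          rw [← Finset.sum_div, Finset.sum_add_distrib, Finset.sum_const, Finset.card_range,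
            nsmul_eq_mul]
      _ = n * Complex.normSq d / 2 := by rw [hz]; ring
  have hL : Complex.normSq d = (‖M - c‖)^2 := by rw [Complex.sq_norm, hd]
  constructor
  · calc ∑ k ∈ Finset.range n, Complex.normSq (M - (c + R * e k))
        = ∑ k ∈ Finset.range n, ((Complex.normSq d + R^2) - (2*R) * x k) :=
          Finset.sum_congr rfl fun k _ => h1 k
      _ = n * (Complex.normSq d + R^2) - (2*R) * ∑ k ∈ Finset.range n, x k := by
          rw [Finset.sum_sub_distrib, Finset.sum_const, Finset.card_range, nsmul_eq_mul,
            ← Finset.mul_sum]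
      _ = n * ((‖M-c‖)^2 + R^2) := by rw [hx, hL]; ring
  · calc ∑ k ∈ Finset.range n, (Complex.normSq (M - (c + R * e k)))^2
        = ∑ k ∈ Finset.range n, ((Complex.normSq d + R^2)^2
            - (4*R*(Complex.normSq d + R^2)) * x k + (4*R^2) * (x k)^2) := by
          refine Finset.sum_congr rfl fun k _ => ?_
          rw [h1]; ring
      _ = n * (Complex.normSq d + R^2)^2
            - (4*R*(Complex.normSq d + R^2)) * ∑ k ∈ Finset.range n, x k
            + (4*R^2) * ∑ k ∈ Finset.range n, (x k)^2 := by
          rw [Finset.sum_add_distrib, Finset.sum_sub_distrib, Finset.sum_const,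
            Finset.card_range, nsmul_eq_mul, ← Finset.mul_sum, ← Finset.mul_sum]
      _ = n * (((‖M-c‖)^2 + R^2)^2 + 2*R^2*(‖M-c‖)^2) := by
          rw [hx, hx2, hL]; ring

theorem sizes_uniquely_determined (n : ℕ) (hn : 3 ≤ n)
    (c₁ c₂ M : ℂ) (R₁ R₂ α β : ℝ) (hR₁ : 0 < R₁) (hR₂ : 0 < R₂)
    (L₁ L₂ : ℝ) (hL₁ : L₁ = ‖M - c₁‖) (hL₂ : L₂ = ‖M - c₂‖)
    (hdist : (Finset.range n).val.map
        (fun k => ‖M - (c₁ + R₁ * Complex.exp (Complex.I * ((2 * π * k / n + α : ℝ) : ℂ)))‖)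
      = (Finset.range n).val.map
          (fun k => ‖M - (c₂ + R₂ * Complex.exp (Complex.I * ((2 * π * k / n + β : ℝ) : ℂ)))‖)) :
    ({R₁ ^ 2, L₁ ^ 2} : Multiset ℝ) = ({R₂ ^ 2, L₂ ^ 2} : Multiset ℝ)
      ∧ (R₁ ≠ R₂ → R₂ = L₁ ∧ L₂ = R₁) := by
  have hncast : ((n:ℝ)) ≠ 0 := by positivity
  have sq_inj : ∀ u v : ℝ, 0 ≤ u → 0 ≤ v → u^2 = v^2 → u = v := fun u v hu hv h => by
    nlinarith [sq_nonneg (u - v), sq_nonneg (u + v)]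
  -- sums of squared distances are equal
  have h2 : ∑ k ∈ Finset.range n,
        Complex.normSq (M - (c₁ + R₁ * Complex.exp (Complex.I * ((2 * π * k / n + α : ℝ) : ℂ))))
      = ∑ k ∈ Finset.range n,
        Complex.normSq (M - (c₂ + R₂ * Complex.exp (Complex.I * ((2 * π * k / n + β : ℝ) : ℂ)))) := by
    have h := congrArg (fun m : Multiset ℝ => (m.map (fun t => t^2)).sum) hdist
    simp only [Bind.bind, Pure.pure, Multiset.bind_singleton, Multiset.map_map,
      Function.comp, Complex.sq_norm] at h
    rw [Finset.sum, Finset.sum]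
    exact h
  have h4 : ∑ k ∈ Finset.range n,
        (Complex.normSq (M - (c₁ + R₁ * Complex.exp (Complex.I * ((2 * π * k / n + α : ℝ) : ℂ)))))^2
      = ∑ k ∈ Finset.range n,
        (Complex.normSq (M - (c₂ + R₂ * Complex.exp (Complex.I * ((2 * π * k / n + β : ℝ) : ℂ)))))^2 := by
    have h := congrArg (fun m : Multiset ℝ => (m.map (fun t => (t^2)^2)).sum) hdist
    simp only [Bind.bind, Pure.pure, Multiset.bind_singleton, Multiset.map_map,
      Function.comp, Complex.sq_norm] at h
    rw [Finset.sum, Finset.sum]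
    exact h
  obtain ⟨p1a, p1b⟩ := polygon_sums n hn c₁ M R₁ α
  obtain ⟨p2a, p2b⟩ := polygon_sums n hn c₂ M R₂ β
  rw [p1a, p2a, ← hL₁, ← hL₂] at h2
  rw [p1b, p2b, ← hL₁, ← hL₂] at h4
  have hsum : L₁^2 + R₁^2 = L₂^2 + R₂^2 := mul_left_cancel₀ hncast h2
  have hprod : R₁^2 * L₁^2 = R₂^2 * L₂^2 := by
    have h4' := mul_left_cancel₀ hncast h4
    nlinarith [h4', hsum]
  have hroot : (R₂^2 - R₁^2) * (R₂^2 - L₁^2) = 0 := by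
    linear_combination (-(R₂^2)) * hsum + hprod
  have hL₁0 : 0 ≤ L₁ := hL₁ ▸ norm_nonneg _
  have hL₂0 : 0 ≤ L₂ := hL₂ ▸ norm_nonneg _
  rcases mul_eq_zero.mp hroot with h | h
  · have ha : R₂^2 = R₁^2 := by linarith
    have hb : L₂^2 = L₁^2 := by linarith
    have hRR : R₂ = R₁ := sq_inj _ _ hR₂.le hR₁.le ha
    refine ⟨by rw [ha, hb], fun hne => absurd hRR.symm hne⟩
  · have ha : R₂^2 = L₁^2 := by linarith
    have hb : L₂^2 = R₁^2 := by linarith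
    have hRL : R₂ = L₁ := sq_inj _ _ hR₂.le hL₁0 ha
    have hLR : L₂ = R₁ := sq_inj _ _ hL₂0 hR₁.le hb
    constructor
    · rw [← ha, ← hb]
      exact Multiset.cons_swap _ _ _
    · exact fun _ => ⟨hRL, hLR⟩
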